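/- Let G be a group with two symmetric generating sets X and Y (not necessarily finite), Λ a finite alphabet, and C a class of formal languages that is closed under homomorphism, finite intersection and inverse homomorphism, and contains the regular languages. If (G,X,Λ) is C-graph automatic, then (G,Y,Λ) is C-graph automatic (with the same normal form language L). -/

import Mathlib

/-- The convolution of two words `u ∈ A*`, `v ∈ B*`: the word of length
`max |u| |v|` over `Option A × Option B` (with `none` playing the role of the
padding symbol ⋄) whose `i`-th letter is the pair of the `i`-th letters of `u`
and `v`, padded with `none`. -/
def conv {A B : Type} (u : List A) (v : List B) : List (Option A × Option B) :=
  (List.range (max u.length v.length)).map fun i => (u[i]?, v[i]?)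

/-- The multiplier language `L_x` of a normal form `nf : L → G` for the
group element `x`: all convolutions `⊗(u,v)` with `u, v ∈ L` and `ū x = v̄`. -/
def Mult {Λ G : Type} [Group G] (nf : List Λ → G) (L : Language Λ) (x : G) :
    Language (Option Λ × Option Λ) :=
  { w | ∃ u ∈ L, ∃ v ∈ L, nf u * x = nf v ∧ w = conv u v }

/-- The word length (geodesic length) `‖g‖_X` of `g` with respect to a generating set
`X ⊆ G`: the minimal length of a word over `X` whose product is `g`. -/
noncomputable def wordLength {G : Type} [Group G] (X : Set G) (g : G) : ℕ :=
  sInf { n | ∃ w : List G, (∀ a ∈ w, a ∈ X) ∧ w.length = n ∧ w.prod = g }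

/-- A language is regular if it is accepted by a deterministic finite automaton
with finitely many states. -/
def IsRegLang {α : Type} (L : Language α) : Prop :=
  ∃ (σ : Type) (_ : Fintype σ) (M : DFA α σ), M.accepts = L

/-- A class of formal languages: an assignment of a set of languages to each alphabet. -/
def LangClass : Type 1 := (α : Type) → Set (Language α)

/-- The image of a language under the monoid homomorphism `α* → β*` induced by
`f : α → List β`. -/
def homImage {α β : Type} (f : α → List β) (L : Language α) : Language β :=
  { w | ∃ u ∈ L, w = (u.map f).flatten }

/-- The preimage of a language under the monoid homomorphism `α* → β*` induced by
`f : α → List β`. -/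
def homPreimage {α β : Type} (f : α → List β) (L : Language β) : Language α :=
  { u | (u.map f).flatten ∈ L }

/-- `C` is closed under homomorphism. -/
def ClosedUnderHom (C : LangClass) : Prop :=
  ∀ (α β : Type) [Fintype α] [Fintype β], ∀ L ∈ C α, ∀ f : α → List β, homImage f L ∈ C β

/-- `C` is closed under ε-free homomorphism. -/
def ClosedUnderEpsFreeHom (C : LangClass) : Prop :=
  ∀ (α β : Type) [Fintype α] [Fintype β], ∀ L ∈ C α, ∀ f : α → List β,
    (∀ a, f a ≠ []) → homImage f L ∈ C β

/-- `C` is closed under inverse homomorphism. -/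
def ClosedUnderInvHom (C : LangClass) : Prop :=
  ∀ (α β : Type) [Fintype α] [Fintype β], ∀ L ∈ C β, ∀ f : α → List β, homPreimage f L ∈ C α

/-- `C` is closed under (finite) intersection. -/
def ClosedUnderInter (C : LangClass) : Prop :=
  ∀ (α : Type) [Fintype α], ∀ L₁ ∈ C α, ∀ L₂ ∈ C α, L₁ ⊓ L₂ ∈ C α

/-- `C` is closed under intersection with regular languages. -/
def ClosedUnderInterReg (C : LangClass) : Prop :=
  ∀ (α : Type) [Fintype α], ∀ L ∈ C α, ∀ R : Language α, IsRegLang R → L ⊓ R ∈ C α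

/-- `C` contains all regular languages. -/
def ContainsRegular (C : LangClass) : Prop :=
  ∀ (α : Type) [Fintype α], ∀ L : Language α, IsRegLang L → L ∈ C α

/-- `(G,X,Λ)` is `C`-graph automatic via the normal form `L ⊆ Λ*` with bijection
`nf : L → G`: `L ∈ C`, `nf` restricted to `L` is a bijection onto `G`, and every
multiplier language `L_x`, `x ∈ X`, is in `C`. -/
def CGraphAutoWith (C : LangClass) {G : Type} [Group G] (X : Set G) {Λ : Type} [Fintype Λ]
    (L : Language Λ) (nf : List Λ → G) : Prop :=
  Set.BijOn nf L Set.univ ∧ L ∈ C Λ ∧ ∀ x ∈ X, Mult nf L x ∈ C (Option Λ × Option Λ)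

namespace CoG

variable {Λ : Type}

/-- Convolution of three words. -/
def conv3 (u m v : List Λ) : List (Option Λ × Option Λ × Option Λ) :=
  (List.range (max (max u.length m.length) v.length)).map fun i => (u[i]?, m[i]?, v[i]?)

lemma head?_tail_ext {u v : List Λ} (h1 : u.head? = v.head?) (h2 : u.tail = v.tail) : u = v := by
  cases u <;> cases v <;> simp_all

lemma conv_eq_nil {A B : Type} {u : List A} {v : List B} : conv u v = [] ↔ u = [] ∧ v = [] := by
  rw [← List.length_eq_zero_iff (l := conv u v)]
  simp [conv, ← List.length_eq_zero_iff]

lemma conv_cons {A B : Type} {u : List A} {v : List B} (h : ¬(u = [] ∧ v = [])) :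
    conv u v = (u.head?, v.head?) :: conv u.tail v.tail := by
  have hm : max u.length v.length = max u.tail.length v.tail.length + 1 := by
    cases u <;> cases v <;> simp_all <;> omega
  unfold conv
  rw [hm, List.range_succ_eq_map, List.map_cons, List.map_map]
  congr 1
  · simp [← List.head?_eq_getElem?]
  · apply List.map_congr_left; intro i hi
    simp [Function.comp, List.getElem?_tail]

lemma conv3_cons {u m v : List Λ} (h : ¬(u = [] ∧ m = [] ∧ v = [])) :
    conv3 u m v = (u.head?, m.head?, v.head?) :: conv3 u.tail m.tail v.tail := by
  have hm : max (max u.length m.length) v.length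
      = max (max u.tail.length m.tail.length) v.tail.length + 1 := by
    cases u <;> cases m <;> cases v <;> simp_all <;> omega
  unfold conv3
  rw [hm, List.range_succ_eq_map, List.map_cons, List.map_map]
  congr 1
  · simp [← List.head?_eq_getElem?]
  · apply List.map_congr_left; intro i hi
    simp [Function.comp, List.getElem?_tail]

lemma conv_inj : ∀ (w : List (Option Λ × Option Λ)) (u v u' v' : List Λ),
    conv u v = w → conv u' v' = w → u = u' ∧ v = v' := by
  intro w
  induction w with
  | nil =>
    intro u v u' v' h h'
    rw [conv_eq_nil] at h h'
    exact ⟨h.1.trans h'.1.symm, h.2.trans h'.2.symm⟩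
  | cons l w ih =>
    intro u v u' v' h h'
    have hu : ¬(u = [] ∧ v = []) := by
      rintro ⟨rfl, rfl⟩; simp [conv] at h
    have hu' : ¬(u' = [] ∧ v' = []) := by
      rintro ⟨rfl, rfl⟩; simp [conv] at h'
    rw [conv_cons hu] at h
    rw [conv_cons hu'] at h'
    obtain ⟨h1, h2⟩ := List.cons.injEq .. ▸ h
    obtain ⟨h1', h2'⟩ := List.cons.injEq .. ▸ h'
    obtain ⟨e1, e2⟩ := ih _ _ _ _ h2 h2'
    have p1 : u.head? = u'.head? := congrArg Prod.fst (h1.trans h1'.symm)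
    have p2 : v.head? = v'.head? := congrArg Prod.snd (h1.trans h1'.symm)
    exact ⟨head?_tail_ext p1 e1, head?_tail_ext p2 e2⟩

lemma flatten_map_singleton {α β : Type} (f : α → β) (l : List α) :
    (l.map fun a => [f a]).flatten = l.map f := by
  induction l <;> simp_all

/-! ### Projections from triples to pairs -/

def p12 (l : Option Λ × Option Λ × Option Λ) : List (Option Λ × Option Λ) :=
  match l with
  | (none, none, _) => []
  | l => [(l.1, l.2.1)]

def p23 (l : Option Λ × Option Λ × Option Λ) : List (Option Λ × Option Λ) :=
  match l with
  | (_, none, none) => []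
  | l => [(l.2.1, l.2.2)]

def p13 (l : Option Λ × Option Λ × Option Λ) : List (Option Λ × Option Λ) :=
  match l with
  | (none, _, none) => []
  | l => [(l.1, l.2.2)]

lemma flatten_p12_nil : ∀ v : List Λ, ((conv3 [] [] v).map p12).flatten = [] := by
  intro v
  induction v with
  | nil => rfl
  | cons c v ih =>
    rw [conv3_cons (by simp)]
    simpa [p12] using ih

lemma flatten_p23_nil : ∀ u : List Λ, ((conv3 u [] []).map p23).flatten = [] := by
  intro u
  induction u with
  | nil => rfl
  | cons c u ih =>
    rw [conv3_cons (by simp)]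
    simpa [p23] using ih

lemma flatten_p13_nil : ∀ m : List Λ, ((conv3 [] m []).map p13).flatten = [] := by
  intro m
  induction m with
  | nil => rfl
  | cons c m ih =>
    rw [conv3_cons (by simp)]
    simpa [p13] using ih

lemma flatten_p12_aux : ∀ n (u m v : List Λ), u.length + m.length + v.length ≤ n →
    ((conv3 u m v).map p12).flatten = conv u m := by
  intro n
  induction n with
  | zero =>
    intro u m v h
    obtain rfl : u = [] := List.length_eq_zero_iff.mp (by omega)
    obtain rfl : m = [] := List.length_eq_zero_iff.mp (by omega)
    obtain rfl : v = [] := List.length_eq_zero_iff.mp (by omega)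
    rfl
  | succ n ih =>
    intro u m v h
    by_cases hum : u = [] ∧ m = []
    · obtain ⟨rfl, rfl⟩ := hum
      rw [flatten_p12_nil]
      exact (conv_eq_nil.mpr ⟨rfl, rfl⟩).symm
    · rw [conv3_cons (by tauto), conv_cons hum]
      have hp : p12 (u.head?, m.head?, v.head?) = [(u.head?, m.head?)] := by
        rcases u with _ | ⟨a, u⟩ <;> rcases m with _ | ⟨b, m⟩ <;> simp_all [p12]
      rw [List.map_cons, List.flatten_cons, hp]
      rw [ih u.tail m.tail v.tail (by
        have b1 : u.tail.length = u.length - 1 := List.length_tail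
        have b2 : m.tail.length = m.length - 1 := List.length_tail
        have b3 : v.tail.length = v.length - 1 := List.length_tail
        have hpos : 1 ≤ u.length + m.length := by
          by_contra hc
          push_neg at hc
          exact hum ⟨List.length_eq_zero_iff.mp (by omega), List.length_eq_zero_iff.mp (by omega)⟩
        omega)]
      rfl

lemma flatten_p23_aux : ∀ n (u m v : List Λ), u.length + m.length + v.length ≤ n →
    ((conv3 u m v).map p23).flatten = conv m v := by
  intro n
  induction n with
  | zero =>
    intro u m v h
    obtain rfl : u = [] := List.length_eq_zero_iff.mp (by omega)
    obtain rfl : m = [] := List.length_eq_zero_iff.mp (by omega)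
    obtain rfl : v = [] := List.length_eq_zero_iff.mp (by omega)
    rfl
  | succ n ih =>
    intro u m v h
    by_cases hum : m = [] ∧ v = []
    · obtain ⟨rfl, rfl⟩ := hum
      rw [flatten_p23_nil]
      exact (conv_eq_nil.mpr ⟨rfl, rfl⟩).symm
    · rw [conv3_cons (by tauto), conv_cons hum]
      have hp : p23 (u.head?, m.head?, v.head?) = [(m.head?, v.head?)] := by
        rcases m with _ | ⟨a, m⟩ <;> rcases v with _ | ⟨b, v⟩ <;> simp_all [p23]
      rw [List.map_cons, List.flatten_cons, hp]
      rw [ih u.tail m.tail v.tail (by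
        have b1 : u.tail.length = u.length - 1 := List.length_tail
        have b2 : m.tail.length = m.length - 1 := List.length_tail
        have b3 : v.tail.length = v.length - 1 := List.length_tail
        have hpos : 1 ≤ m.length + v.length := by
          by_contra hc
          push_neg at hc
          exact hum ⟨List.length_eq_zero_iff.mp (by omega), List.length_eq_zero_iff.mp (by omega)⟩
        omega)]
      rfl

lemma flatten_p13_aux : ∀ n (u m v : List Λ), u.length + m.length + v.length ≤ n →
    ((conv3 u m v).map p13).flatten = conv u v := by
  intro n
  induction n with
  | zero =>
    intro u m v h
    obtain rfl : u = [] := List.length_eq_zero_iff.mp (by omega)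
    obtain rfl : m = [] := List.length_eq_zero_iff.mp (by omega)
    obtain rfl : v = [] := List.length_eq_zero_iff.mp (by omega)
    rfl
  | succ n ih =>
    intro u m v h
    by_cases hum : u = [] ∧ v = []
    · obtain ⟨rfl, rfl⟩ := hum
      rw [flatten_p13_nil]
      exact (conv_eq_nil.mpr ⟨rfl, rfl⟩).symm
    · rw [conv3_cons (by tauto), conv_cons hum]
      have hp : p13 (u.head?, m.head?, v.head?) = [(u.head?, v.head?)] := by
        rcases u with _ | ⟨a, u⟩ <;> rcases v with _ | ⟨b, v⟩ <;> simp_all [p13]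
      rw [List.map_cons, List.flatten_cons, hp]
      rw [ih u.tail m.tail v.tail (by
        have b1 : u.tail.length = u.length - 1 := List.length_tail
        have b2 : m.tail.length = m.length - 1 := List.length_tail
        have b3 : v.tail.length = v.length - 1 := List.length_tail
        have hpos : 1 ≤ u.length + v.length := by
          by_contra hc
          push_neg at hc
          exact hum ⟨List.length_eq_zero_iff.mp (by omega), List.length_eq_zero_iff.mp (by omega)⟩
        omega)]
      rfl

lemma flatten_p12 (u m v : List Λ) : ((conv3 u m v).map p12).flatten = conv u m :=
  flatten_p12_aux _ u m v le_rfl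

lemma flatten_p23 (u m v : List Λ) : ((conv3 u m v).map p23).flatten = conv m v :=
  flatten_p23_aux _ u m v le_rfl

lemma flatten_p13 (u m v : List Λ) : ((conv3 u m v).map p13).flatten = conv u v :=
  flatten_p13_aux _ u m v le_rfl

/-! ### The regular language of triple convolutions -/

def ocons (o : Option Λ) (u : List Λ) : List Λ :=
  match o with
  | some a => a :: u
  | none => u

lemma ocons_head? (o : Option Λ) (u : List Λ) (h : o = none → u = []) :
    (ocons o u).head? = o := by
  cases o <;> simp_all [ocons]

lemma ocons_tail (o : Option Λ) (u : List Λ) (h : o = none → u = []) :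
    (ocons o u).tail = u := by
  cases o <;> simp_all [ocons]

lemma ocons_eq_nil {o : Option Λ} {u : List Λ} (h : ocons o u = []) : o = none := by
  cases o <;> simp_all [ocons]

lemma ocons_nil (o : Option Λ) (u : List Λ) (h : o = none → u = []) (ho : o = none) :
    ocons o u = [] := by
  cases o <;> simp_all [ocons]

def validLetter (e : Bool × Bool × Bool) (l : Option Λ × Option Λ × Option Λ) : Prop :=
  ¬(l.1 = none ∧ l.2.1 = none ∧ l.2.2 = none) ∧ (e.1 = true → l.1 = none) ∧
    (e.2.1 = true → l.2.1 = none) ∧ (e.2.2 = true → l.2.2 = none)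

open Classical in
noncomputable def M3 : DFA (Option Λ × Option Λ × Option Λ) (Option (Bool × Bool × Bool)) where
  step s l :=
    match s with
    | none => none
    | some e => if validLetter e l then some (l.1.isNone, l.2.1.isNone, l.2.2.isNone) else none
  start := some (false, false, false)
  accept := {s | s ≠ none}

lemma M3_eval_none : ∀ w : List (Option Λ × Option Λ × Option Λ), M3.evalFrom none w = none := by
  intro w
  induction w with
  | nil => rfl
  | cons l w ih => exact ih

lemma M3_sound : ∀ (w : List (Option Λ × Option Λ × Option Λ)) (e : Bool × Bool × Bool),
    M3.evalFrom (some e) w ≠ none →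
    ∃ u m v : List Λ, w = conv3 u m v ∧ (e.1 = true → u = []) ∧ (e.2.1 = true → m = []) ∧
      (e.2.2 = true → v = []) := by
  intro w
  induction w with
  | nil =>
    intro e _
    exact ⟨[], [], [], rfl, fun _ => rfl, fun _ => rfl, fun _ => rfl⟩
  | cons l w ih =>
    intro e h
    have hv : validLetter e l := by
      by_contra hc
      apply h
      show M3.evalFrom (M3.step (some e) l) w = none
      have : M3.step (some e) l = none := by simp [M3, hc]
      rw [this, M3_eval_none]
    have hstep : M3.step (some e) l = some (l.1.isNone, l.2.1.isNone, l.2.2.isNone) := by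
      simp [M3, hv]
    have h2 : M3.evalFrom (some (l.1.isNone, l.2.1.isNone, l.2.2.isNone)) w ≠ none := by
      intro hc; apply h
      show M3.evalFrom (M3.step (some e) l) w = none
      rw [hstep]; exact hc
    obtain ⟨u, m, v, rfl, h1', h2', h3'⟩ := ih _ h2
    have e1 : l.1 = none → u = [] := fun hn => h1' (by simp [hn])
    have e2 : l.2.1 = none → m = [] := fun hn => h2' (by simp [hn])
    have e3 : l.2.2 = none → v = [] := fun hn => h3' (by simp [hn])
    refine ⟨ocons l.1 u, ocons l.2.1 m, ocons l.2.2 v, ?_, ?_, ?_, ?_⟩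
    · have hne : ¬(ocons l.1 u = [] ∧ ocons l.2.1 m = [] ∧ ocons l.2.2 v = []) := by
        rintro ⟨ha, hb, hc⟩
        exact hv.1 ⟨ocons_eq_nil ha, ocons_eq_nil hb, ocons_eq_nil hc⟩
      rw [conv3_cons hne, ocons_head? _ _ e1, ocons_head? _ _ e2, ocons_head? _ _ e3,
        ocons_tail _ _ e1, ocons_tail _ _ e2, ocons_tail _ _ e3]
    · exact fun he => ocons_nil _ _ e1 (hv.2.1 he)
    · exact fun he => ocons_nil _ _ e2 (hv.2.2.1 he)
    · exact fun he => ocons_nil _ _ e3 (hv.2.2.2 he)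

lemma M3_complete : ∀ n (u m v : List Λ), u.length + m.length + v.length ≤ n →
    ∀ e : Bool × Bool × Bool, (e.1 = true → u = []) → (e.2.1 = true → m = []) →
    (e.2.2 = true → v = []) → M3.evalFrom (some e) (conv3 u m v) ≠ none := by
  intro n
  induction n with
  | zero =>
    intro u m v h e _ _ _
    obtain rfl : u = [] := List.length_eq_zero_iff.mp (by omega)
    obtain rfl : m = [] := List.length_eq_zero_iff.mp (by omega)
    obtain rfl : v = [] := List.length_eq_zero_iff.mp (by omega)
    simp [conv3, M3, DFA.evalFrom]
  | succ n ih =>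
    intro u m v h e h1 h2 h3
    by_cases hnil : u = [] ∧ m = [] ∧ v = []
    · obtain ⟨rfl, rfl, rfl⟩ := hnil
      simp [conv3, M3, DFA.evalFrom]
    · rw [conv3_cons hnil]
      have hv : validLetter e (u.head?, m.head?, v.head?) := by
        refine ⟨?_, ?_, ?_, ?_⟩
        · rintro ⟨ha, hb, hc⟩
          exact hnil ⟨List.head?_eq_none_iff.mp ha, List.head?_eq_none_iff.mp hb,
            List.head?_eq_none_iff.mp hc⟩
        · intro he; simp [h1 he]
        · intro he; simp [h2 he]
        · intro he; simp [h3 he]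
      show M3.evalFrom (M3.step (some e) _) _ ≠ none
      have hstep : M3.step (some e) (u.head?, m.head?, v.head?)
          = some (u.head?.isNone, m.head?.isNone, v.head?.isNone) := by
        simp [M3, hv]
      rw [hstep]
      apply ih
      · have b1 : u.tail.length = u.length - 1 := List.length_tail
        have b2 : m.tail.length = m.length - 1 := List.length_tail
        have b3 : v.tail.length = v.length - 1 := List.length_tail
        have hpos : 1 ≤ u.length + m.length + v.length := by
          by_contra hc
          push_neg at hc
          exact hnil ⟨List.length_eq_zero_iff.mp (by omega), List.length_eq_zero_iff.mp (by omega),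
            List.length_eq_zero_iff.mp (by omega)⟩
        omega
      · intro he
        simp only [Option.isNone_iff_eq_none] at he
        simp [List.head?_eq_none_iff.mp he]
      · intro he
        simp only [Option.isNone_iff_eq_none] at he
        simp [List.head?_eq_none_iff.mp he]
      · intro he
        simp only [Option.isNone_iff_eq_none] at he
        simp [List.head?_eq_none_iff.mp he]

lemma M3_accepts : (M3 : DFA (Option Λ × Option Λ × Option Λ) _).accepts
    = {w | ∃ u m v : List Λ, w = conv3 u m v} := by
  ext w
  rw [DFA.mem_accepts]
  constructor
  · intro h
    obtain ⟨u, m, v, hw, -⟩ := M3_sound w (false, false, false) h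
    exact ⟨u, m, v, hw⟩
  · rintro ⟨u, m, v, rfl⟩
    exact M3_complete (u.length + m.length + v.length) u m v le_rfl (false, false, false)
      (by simp) (by simp) (by simp)

/-! ### The regular language of diagonal convolutions -/

open Classical in
noncomputable def Mdiag : DFA (Option Λ × Option Λ) Bool where
  step s l := s && (if ∃ a : Λ, l = (some a, some a) then true else false)
  start := true
  accept := {s | s = true}

lemma Mdiag_eval_false : ∀ w : List (Option Λ × Option Λ), Mdiag.evalFrom false w = false := by
  intro w
  induction w with
  | nil => rfl
  | cons l w ih =>
    show Mdiag.evalFrom (Mdiag.step false l) w = false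
    have : Mdiag.step false l = false := by simp [Mdiag]
    rw [this]; exact ih

open Classical in
lemma Mdiag_eval_true : ∀ w : List (Option Λ × Option Λ),
    Mdiag.evalFrom true w = true ↔ ∀ l ∈ w, ∃ a : Λ, l = (some a, some a) := by
  intro w
  induction w with
  | nil => simp
  | cons l w ih =>
    by_cases hl : ∃ a : Λ, l = (some a, some a)
    · have hstep : Mdiag.step true l = true := by simp [Mdiag, hl]
      have : Mdiag.evalFrom true (l :: w) = Mdiag.evalFrom true w := by
        show Mdiag.evalFrom (Mdiag.step true l) w = _
        rw [hstep]
      rw [this, ih]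
      simp [hl]
    · have hstep : Mdiag.step true l = false := by simp [Mdiag, hl]
      have : Mdiag.evalFrom true (l :: w) = false := by
        show Mdiag.evalFrom (Mdiag.step true l) w = false
        rw [hstep]; exact Mdiag_eval_false w
      rw [this]
      simp [hl]

lemma diag_letters {u : List Λ} : ∀ l ∈ conv u u, ∃ a : Λ, l = (some a, some a) := by
  intro l hl
  simp only [conv, Nat.max_self, List.mem_map, List.mem_range] at hl
  obtain ⟨i, hi, rfl⟩ := hl
  exact ⟨u[i], by simp [List.getElem?_eq_getElem hi]⟩

lemma Mdiag_accepts : (Mdiag : DFA (Option Λ × Option Λ) Bool).accepts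
    = {w | ∃ u : List Λ, w = conv u u} := by
  ext w
  rw [DFA.mem_accepts]
  show Mdiag.evalFrom true w = true ↔ _
  rw [Mdiag_eval_true]
  constructor
  · intro h
    induction w with
    | nil => exact ⟨[], rfl⟩
    | cons l w ih =>
      obtain ⟨u, rfl⟩ := ih fun x hx => h x (List.mem_cons_of_mem _ hx)
      obtain ⟨a, rfl⟩ := h l (List.mem_cons_self)
      exact ⟨a :: u, by rw [conv_cons (u := a::u) (v := a::u) (by simp)]; rfl⟩
  · rintro ⟨u, rfl⟩
    exact diag_letters

def fdiag : Option Λ × Option Λ → List Λ := fun l => l.1.toList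

lemma flatten_fdiag (u : List Λ) : ((conv u u).map fdiag).flatten = u := by
  induction u with
  | nil => rfl
  | cons a u ih =>
    rw [conv_cons (u := a::u) (v := a::u) (by simp)]
    simpa [fdiag] using ih

def fswap : Option Λ × Option Λ → List (Option Λ × Option Λ) := fun l => [(l.2, l.1)]

lemma map_swap_conv (u v : List Λ) :
    ((conv u v).map fswap).flatten = conv v u := by
  rw [show fswap = (fun l : Option Λ × Option Λ =>
    [(fun p : Option Λ × Option Λ => (p.2, p.1)) l]) from rfl, flatten_map_singleton]
  simp [conv, List.map_map, Nat.max_comm, Function.comp]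

/-! ### Multiplier language identities -/

variable {G : Type} [Group G] (nf : List Λ → G) (L : Language Λ)

lemma Mult_one_eq (hinj : Set.InjOn nf L) :
    Mult nf L 1 = homPreimage fdiag L ⊓ Mdiag.accepts := by
  ext w
  constructor
  · rintro ⟨u, hu, v, hv, heq, rfl⟩
    obtain rfl : u = v := hinj hu hv (by simpa using heq)
    refine ⟨?_, ?_⟩
    · show ((conv u u).map fdiag).flatten ∈ L
      rw [flatten_fdiag]; exact hu
    · rw [Mdiag_accepts]; exact ⟨u, rfl⟩
  · rintro ⟨h1, h2⟩
    rw [Mdiag_accepts] at h2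
    obtain ⟨u, rfl⟩ := h2
    have hu : u ∈ L := by
      have : ((conv u u).map fdiag).flatten ∈ L := h1
      rwa [flatten_fdiag] at this
    exact ⟨u, hu, u, hu, by simp, rfl⟩

lemma Mult_inv_eq (g : G) :
    Mult nf L g⁻¹ = homImage fswap (Mult nf L g) := by
  ext w
  constructor
  · rintro ⟨u, hu, v, hv, heq, rfl⟩
    refine ⟨conv v u, ⟨v, hv, u, hu, ?_, rfl⟩, (map_swap_conv v u).symm⟩
    rw [← heq]; group
  · rintro ⟨t, ⟨u, hu, v, hv, heq, rfl⟩, rfl⟩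
    refine ⟨v, hv, u, hu, ?_, map_swap_conv u v⟩
    rw [← heq]; group

lemma Mult_mul_eq (hsurj : Set.SurjOn nf L Set.univ) (g h : G) :
    Mult nf L (g * h) = homImage p13
      ((homPreimage p12 (Mult nf L g) ⊓ homPreimage p23 (Mult nf L h)) ⊓ M3.accepts) := by
  ext w
  constructor
  · rintro ⟨u, hu, v, hv, heq, rfl⟩
    obtain ⟨m, hm, hnm⟩ := hsurj (Set.mem_univ (nf u * g))
    refine ⟨conv3 u m v, ⟨⟨?_, ?_⟩, ?_⟩, (flatten_p13 u m v).symm⟩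
    · show ((conv3 u m v).map p12).flatten ∈ Mult nf L g
      rw [flatten_p12]
      exact ⟨u, hu, m, hm, hnm.symm, rfl⟩
    · show ((conv3 u m v).map p23).flatten ∈ Mult nf L h
      rw [flatten_p23]
      refine ⟨m, hm, v, hv, ?_, rfl⟩
      rw [hnm, mul_assoc]; exact heq
    · rw [M3_accepts]; exact ⟨u, m, v, rfl⟩
  · rintro ⟨t, ⟨⟨h12, h23⟩, hR⟩, rfl⟩
    rw [M3_accepts] at hR
    obtain ⟨u, m, v, rfl⟩ := hR
    have h12' : ((conv3 u m v).map p12).flatten ∈ Mult nf L g := h12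
    have h23' : ((conv3 u m v).map p23).flatten ∈ Mult nf L h := h23
    rw [flatten_p12] at h12'
    rw [flatten_p23] at h23'
    obtain ⟨u', hu', m', hm', heq1, hconv1⟩ := h12'
    obtain ⟨eu, em⟩ := conv_inj (conv u' m') u m u' m' hconv1 rfl
    subst eu; subst em
    obtain ⟨m'', hm'', v', hv', heq2, hconv2⟩ := h23'
    obtain ⟨em', ev⟩ := conv_inj (conv m'' v') m v m'' v' hconv2 rfl
    subst em'; subst ev
    refine ⟨u, hu', v, hv', ?_, flatten_p13 u m v⟩
    rw [← mul_assoc, heq1, heq2]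

end CoG


/-- **Change of generators.** Let `C` be a class of formal languages closed
under homomorphism, finite intersection and inverse homomorphism, and containing the
regular languages. If `(G,X,Λ)` is `C`-graph automatic via the normal form `L`, and `Y`
is another symmetric generating set of `G`, then `(G,Y,Λ)` is `C`-graph automatic via the
same normal form `L`. -/
theorem change_of_generators (C : LangClass) (hHom : ClosedUnderHom C)
    (hInter : ClosedUnderInter C) (hInv : ClosedUnderInvHom C) (hReg : ContainsRegular C)
    {G : Type} [Group G] (X Y : Set G)
    (hsymX : ∀ x ∈ X, x⁻¹ ∈ X) (hgenX : Subgroup.closure X = ⊤)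
    (hsymY : ∀ y ∈ Y, y⁻¹ ∈ Y) (hgenY : Subgroup.closure Y = ⊤)
    {Λ : Type} [Fintype Λ] (L : Language Λ) (nf : List Λ → G)
    (hX : CGraphAutoWith C X L nf) :
    CGraphAutoWith C Y L nf := by
  obtain ⟨hbij, hL, hmul⟩ := hX
  refine ⟨hbij, hL, fun y hy => ?_⟩
  have hy' : y ∈ Subgroup.closure X := by rw [hgenX]; trivial
  exact Subgroup.closure_induction
    (p := fun g _ => Mult nf L g ∈ C (Option Λ × Option Λ))
    (fun x hx => hmul x hx)
    (by
      show Mult nf L 1 ∈ C (Option Λ × Option Λ)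
      rw [CoG.Mult_one_eq nf L hbij.2.1]
      exact hInter _ _ (hInv _ _ _ hL CoG.fdiag) _
        (hReg _ CoG.Mdiag.accepts ⟨Bool, inferInstance, CoG.Mdiag, rfl⟩))
    (fun a b _ _ pa pb => by
      show Mult nf L (a * b) ∈ C (Option Λ × Option Λ)
      rw [CoG.Mult_mul_eq nf L hbij.2.2 a b]
      exact hHom _ _ _
        (hInter _ _
          (hInter _ _ (hInv _ _ _ pa CoG.p12) _ (hInv _ _ _ pb CoG.p23)) _
          (hReg _ CoG.M3.accepts ⟨Option (Bool × Bool × Bool), inferInstance, CoG.M3, rfl⟩))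
        CoG.p13)
    (fun a _ pa => by
      show Mult nf L a⁻¹ ∈ C (Option Λ × Option Λ)
      rw [CoG.Mult_inv_eq nf L a]
      exact hHom _ _ _ pa CoG.fswap)
    hy'
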